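/- Let p < q be primes, let n₁, n₂ ≥ 1 be integers, and set n = p^{n₁} q^{n₂}. Then the independent domination polynomial of the comaximal graph Γ(ℤ_n) is D_i(Γ(ℤ_n), x) = φ(n)·x + x^{p^{n₁} q^{n₂−1}} + x^{p^{n₁−1} q^{n₂}}. -/

import Mathlib

open Polynomial

/-- The comaximal graph of `ℤ/nℤ`: distinct `a, b` are adjacent iff the ideal
generated by `a` and `b` is the whole ring. -/
def comaximalGraph (n : ℕ) : SimpleGraph (ZMod n) where
  Adj a b := a ≠ b ∧ Ideal.span ({a, b} : Set (ZMod n)) = ⊤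
  symm := by
    constructor
    rintro a b ⟨hab, h⟩
    refine ⟨hab.symm, ?_⟩
    rwa [Set.pair_comm]
  loopless := by
    constructor
    rintro a ⟨h, -⟩
    exact h rfl

/-- `S` is an independent dominating set of `G`. -/
def IsIndepDomSet {V : Type*} (G : SimpleGraph V) (S : Finset V) : Prop :=
  (∀ a ∈ S, ∀ b ∈ S, ¬ G.Adj a b) ∧ ∀ v : V, v ∉ S → ∃ u ∈ S, G.Adj u v

/-- The independent domination polynomial `D_i(G, x) = Σ_k d_i(G,k) x^k`. -/
noncomputable def indepDomPoly {V : Type*} (G : SimpleGraph V) : Polynomial ℝ :=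
  ∑ k ∈ Finset.range (Nat.card V + 1),
    Polynomial.C ((Nat.card {S : Finset V // IsIndepDomSet G S ∧ S.card = k}) : ℝ) *
      Polynomial.X ^ k

/-- The independence polynomial `I(G, x) = Σ_k c_k x^k`. -/
noncomputable def indepPoly {V : Type*} (G : SimpleGraph V) : Polynomial ℝ :=
  ∑ k ∈ Finset.range (Nat.card V + 1),
    Polynomial.C ((Nat.card {S : Finset V //
        (∀ a ∈ S, ∀ b ∈ S, ¬ G.Adj a b) ∧ S.card = k}) : ℝ) *
      Polynomial.X ^ k

lemma aux_cast_val {r n : ℕ} [NeZero n] (hrn : r ∣ n) (x : ZMod n) :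
    ((x.val : ℕ) : ZMod r) = (ZMod.castHom hrn (ZMod r)) x := by
  rw [ZMod.castHom_apply, ZMod.natCast_val]

section main
variable {p q n₁ n₂ : ℕ}

lemma aux_unit_iff (hp : p.Prime) (hq : q.Prime) (h1 : 1 ≤ n₁) (h2 : 1 ≤ n₂)
    (a : ZMod (p ^ n₁ * q ^ n₂)) :
    IsUnit a ↔ ¬ p ∣ a.val ∧ ¬ q ∣ a.val := by
  haveI : NeZero (p ^ n₁ * q ^ n₂) := ⟨Nat.mul_ne_zero (pow_ne_zero _ hp.pos.ne') (pow_ne_zero _ hq.pos.ne')⟩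
  have key := ZMod.isUnit_iff_coprime a.val (p ^ n₁ * q ^ n₂)
  rw [ZMod.natCast_val, ZMod.cast_id] at key
  rw [key]
  constructor
  · intro h
    constructor <;> rintro hd
    · have hpn : p ∣ p ^ n₁ * q ^ n₂ :=
        dvd_mul_of_dvd_left (dvd_pow_self p (by omega)) _
      have : p ∣ 1 := h ▸ Nat.dvd_gcd hd hpn
      exact hp.one_lt.ne' (Nat.dvd_one.mp this)
    · have hqn : q ∣ p ^ n₁ * q ^ n₂ :=
        dvd_mul_of_dvd_right (dvd_pow_self q (by omega)) _
      have : q ∣ 1 := h ▸ Nat.dvd_gcd hd hqn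
      exact hq.one_lt.ne' (Nat.dvd_one.mp this)
  · rintro ⟨hpd, hqd⟩
    exact Nat.Coprime.mul_right
      ((hp.coprime_iff_not_dvd.mpr hpd).symm.pow_right n₁)
      ((hq.coprime_iff_not_dvd.mpr hqd).symm.pow_right n₂)

lemma aux_adj_iff (hp : p.Prime) (hq : q.Prime) (h1 : 1 ≤ n₁) (h2 : 1 ≤ n₂)
    (a b : ZMod (p ^ n₁ * q ^ n₂)) :
    (comaximalGraph (p ^ n₁ * q ^ n₂)).Adj a b ↔
      a ≠ b ∧ ¬(p ∣ a.val ∧ p ∣ b.val) ∧ ¬(q ∣ a.val ∧ q ∣ b.val) := by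
  haveI : NeZero (p ^ n₁ * q ^ n₂) := ⟨Nat.mul_ne_zero (pow_ne_zero _ hp.pos.ne') (pow_ne_zero _ hq.pos.ne')⟩
  have hpn : p ∣ p ^ n₁ * q ^ n₂ := dvd_mul_of_dvd_left (dvd_pow_self p (by omega)) _
  have hqn : q ∣ p ^ n₁ * q ^ n₂ := dvd_mul_of_dvd_right (dvd_pow_self q (by omega)) _
  constructor
  · rintro ⟨hab, hspan⟩
    refine ⟨hab, ?_, ?_⟩
    · rintro ⟨ha, hb⟩
      have hone : (1 : ZMod (p ^ n₁ * q ^ n₂)) ∈ Ideal.span ({a, b} : Set _) :=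
        hspan ▸ Submodule.mem_top
      obtain ⟨x, y, hxy⟩ := Ideal.mem_span_pair.mp hone
      have hmap := congrArg (ZMod.castHom hpn (ZMod p)) hxy
      haveI : Fact p.Prime := ⟨hp⟩
      rw [map_add, map_mul, map_mul, map_one] at hmap
      rw [← aux_cast_val hpn a, ← aux_cast_val hpn b] at hmap
      rw [(ZMod.natCast_eq_zero_iff _ p).mpr ha,
        (ZMod.natCast_eq_zero_iff _ p).mpr hb] at hmap
      simp at hmap
    · rintro ⟨ha, hb⟩
      have hone : (1 : ZMod (p ^ n₁ * q ^ n₂)) ∈ Ideal.span ({a, b} : Set _) :=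
        hspan ▸ Submodule.mem_top
      obtain ⟨x, y, hxy⟩ := Ideal.mem_span_pair.mp hone
      have hmap := congrArg (ZMod.castHom hqn (ZMod q)) hxy
      haveI : Fact q.Prime := ⟨hq⟩
      rw [map_add, map_mul, map_mul, map_one] at hmap
      rw [← aux_cast_val hqn a, ← aux_cast_val hqn b] at hmap
      rw [(ZMod.natCast_eq_zero_iff _ q).mpr ha,
        (ZMod.natCast_eq_zero_iff _ q).mpr hb] at hmap
      simp at hmap
  · rintro ⟨hab, hpab, hqab⟩
    refine ⟨hab, ?_⟩
    rw [Ideal.eq_top_iff_one, Ideal.mem_span_pair]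
    set g := Nat.gcd a.val b.val with hg
    have hgp : ¬ p ∣ g := fun h =>
      hpab ⟨h.trans (Nat.gcd_dvd_left _ _), h.trans (Nat.gcd_dvd_right _ _)⟩
    have hgq : ¬ q ∣ g := fun h =>
      hqab ⟨h.trans (Nat.gcd_dvd_left _ _), h.trans (Nat.gcd_dvd_right _ _)⟩
    have hcop : Nat.Coprime g (p ^ n₁ * q ^ n₂) :=
      Nat.Coprime.mul_right
        ((hp.coprime_iff_not_dvd.mpr hgp).symm.pow_right n₁)
        ((hq.coprime_iff_not_dvd.mpr hgq).symm.pow_right n₂)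
    have hunit : IsUnit (g : ZMod (p ^ n₁ * q ^ n₂)) :=
      (ZMod.isUnit_iff_coprime g _).mpr hcop
    obtain ⟨u, hu⟩ := hunit
    have hbez := Nat.gcd_eq_gcd_ab a.val b.val
    have hcast := congrArg (fun z : ℤ => (z : ZMod (p ^ n₁ * q ^ n₂))) hbez
    push_cast at hcast
    rw [ZMod.natCast_val, ZMod.natCast_val, ZMod.cast_id, ZMod.cast_id] at hcast
    refine ⟨(↑u⁻¹ : ZMod (p ^ n₁ * q ^ n₂)) * ((Nat.gcdA a.val b.val : ℤ) : ZMod _),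
      (↑u⁻¹ : ZMod (p ^ n₁ * q ^ n₂)) * ((Nat.gcdB a.val b.val : ℤ) : ZMod _), ?_⟩
    have : (↑u⁻¹ : ZMod (p ^ n₁ * q ^ n₂)) * (g : ZMod (p ^ n₁ * q ^ n₂)) = 1 := by
      rw [← hu, ← Units.val_mul, inv_mul_cancel, Units.val_one]
    calc (↑u⁻¹ : ZMod (p ^ n₁ * q ^ n₂)) * _ * a + (↑u⁻¹ : ZMod (p ^ n₁ * q ^ n₂)) * _ * b
        = (↑u⁻¹ : ZMod (p ^ n₁ * q ^ n₂)) *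
            (a * (Nat.gcdA a.val b.val : ℤ) + b * (Nat.gcdB a.val b.val : ℤ)) := by
          ring
      _ = 1 := by rw [← hcast, this]

end main

lemma aux_card_filter {r m n : ℕ} [NeZero n] (hn : n = r * m) :
    (Finset.univ.filter (fun x : ZMod n => r ∣ x.val)).card = m := by
  subst hn
  haveI : NeZero (r * m) := ‹_›
  have hr : 0 < r := by
    rcases Nat.eq_zero_or_pos r with h | h
    · exact absurd (by simp [h]) (NeZero.ne (r * m))
    · exact h
  have himg : Finset.univ.filter (fun x : ZMod (r * m) => r ∣ x.val) =
      (Finset.range m).image (fun k => ((r * k : ℕ) : ZMod (r * m))) := by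
    ext x
    simp only [Finset.mem_filter, Finset.mem_univ, true_and, Finset.mem_image,
      Finset.mem_range]
    constructor
    · rintro ⟨k, hk⟩
      have hklt : k < m := by
        have := x.val_lt
        rw [hk] at this
        exact Nat.lt_of_mul_lt_mul_left this
      exact ⟨k, hklt, by rw [← hk, ZMod.natCast_rightInverse x]⟩
    · rintro ⟨k, hk, rfl⟩
      rw [ZMod.val_cast_of_lt ((Nat.mul_lt_mul_left hr).mpr hk)]
      exact ⟨k, rfl⟩
  rw [himg, Finset.card_image_of_injOn, Finset.card_range]
  intro k1 h1 k2 h2 heq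
  simp only [Finset.coe_range, Set.mem_Iio] at h1 h2
  have e1 := congrArg ZMod.val heq
  rw [ZMod.val_cast_of_lt ((Nat.mul_lt_mul_left hr).mpr h1),
    ZMod.val_cast_of_lt ((Nat.mul_lt_mul_left hr).mpr h2)] at e1
  exact Nat.eq_of_mul_eq_mul_left hr e1

lemma aux_classify (hp : p.Prime) (hq : q.Prime) (hpq : p < q) (h1 : 1 ≤ n₁) (h2 : 1 ≤ n₂)
    [NeZero (p ^ n₁ * q ^ n₂)] (S : Finset (ZMod (p ^ n₁ * q ^ n₂))) :
    IsIndepDomSet (comaximalGraph (p ^ n₁ * q ^ n₂)) S ↔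
      ((∃ a, IsUnit a ∧ S = {a}) ∨
       S = Finset.univ.filter (fun x => p ∣ x.val) ∨
       S = Finset.univ.filter (fun x => q ∣ x.val)) := by
  have hpN : p < p ^ n₁ * q ^ n₂ := by
    calc p < p * q := (Nat.lt_mul_iff_one_lt_right hp.pos).mpr hq.one_lt
    _ ≤ p ^ n₁ * q ^ n₂ := Nat.mul_le_mul (Nat.le_self_pow (by omega) p) (Nat.le_self_pow (by omega) q)
  have hqN : q < p ^ n₁ * q ^ n₂ := by
    calc q < p * q := by
          have := hp.one_lt
          calc q = 1 * q := (one_mul q).symm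
          _ < p * q := (Nat.mul_lt_mul_right hq.pos).mpr this
    _ ≤ p ^ n₁ * q ^ n₂ := Nat.mul_le_mul (Nat.le_self_pow (by omega) p) (Nat.le_self_pow (by omega) q)
  have hpval : ((p : ZMod (p ^ n₁ * q ^ n₂))).val = p := ZMod.val_cast_of_lt hpN
  have hqval : ((q : ZMod (p ^ n₁ * q ^ n₂))).val = q := ZMod.val_cast_of_lt hqN
  have hqnp : ¬ q ∣ p := fun h => absurd (Nat.le_of_dvd hp.pos h) (not_le.mpr hpq)
  have hpnq : ¬ p ∣ q := fun h => hpq.ne ((Nat.prime_dvd_prime_iff_eq hp hq).mp h)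
  constructor
  · rintro ⟨hind, hdom⟩
    by_cases hu : ∃ a ∈ S, IsUnit a
    · obtain ⟨a, haS, haU⟩ := hu
      obtain ⟨hap, haq⟩ := (aux_unit_iff hp hq h1 h2 a).mp haU
      left
      refine ⟨a, haU, ?_⟩
      ext b
      simp only [Finset.mem_singleton]
      constructor
      · intro hbS
        by_contra hba
        exact hind a haS b hbS ((aux_adj_iff hp hq h1 h2 a b).mpr
          ⟨Ne.symm hba, fun h => hap h.1, fun h => haq h.1⟩)
      · rintro rfl; exact haS
    · push_neg at hu
      have hnu : ∀ s ∈ S, p ∣ s.val ∨ q ∣ s.val := by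
        intro s hs
        have := (aux_unit_iff hp hq h1 h2 s).not.mp (hu s hs)
        tauto
      by_cases hP : ∀ s ∈ S, p ∣ s.val
      · right; left
        ext v
        simp only [Finset.mem_filter, Finset.mem_univ, true_and]
        constructor
        · exact fun hv => hP v hv
        · intro hv
          by_contra hvS
          obtain ⟨u, huS, hadj⟩ := hdom v hvS
          exact ((aux_adj_iff hp hq h1 h2 u v).mp hadj).2.1 ⟨hP u huS, hv⟩
      · push_neg at hP
        obtain ⟨b, hbS, hbp⟩ := hP
        have hbq : q ∣ b.val := (hnu b hbS).resolve_left hbp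
        have hQ : ∀ s ∈ S, q ∣ s.val := by
          intro s hs
          by_contra hsq
          have hsp : p ∣ s.val := (hnu s hs).resolve_right hsq
          have hsb : s ≠ b := fun h => hbp (h ▸ hsp)
          exact hind s hs b hbS ((aux_adj_iff hp hq h1 h2 s b).mpr
            ⟨hsb, fun h => hbp h.2, fun h => hsq h.1⟩)
        right; right
        ext v
        simp only [Finset.mem_filter, Finset.mem_univ, true_and]
        constructor
        · exact fun hv => hQ v hv
        · intro hv
          by_contra hvS
          obtain ⟨u, huS, hadj⟩ := hdom v hvS
          exact ((aux_adj_iff hp hq h1 h2 u v).mp hadj).2.2 ⟨hQ u huS, hv⟩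
  · rintro (⟨a, haU, rfl⟩ | rfl | rfl)
    · obtain ⟨hap, haq⟩ := (aux_unit_iff hp hq h1 h2 a).mp haU
      constructor
      · intro x hx y hy hadj
        simp only [Finset.mem_singleton] at hx hy
        subst hx; subst hy
        exact hadj.1 rfl
      · intro v hv
        simp only [Finset.mem_singleton] at hv
        exact ⟨a, Finset.mem_singleton_self a, (aux_adj_iff hp hq h1 h2 a v).mpr
          ⟨Ne.symm hv, fun h => hap h.1, fun h => haq h.1⟩⟩
    · constructor
      · intro x hx y hy hadj
        simp only [Finset.mem_filter, Finset.mem_univ, true_and] at hx hy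
        exact ((aux_adj_iff hp hq h1 h2 x y).mp hadj).2.1 ⟨hx, hy⟩
      · intro v hv
        simp only [Finset.mem_filter, Finset.mem_univ, true_and] at hv
        refine ⟨(p : ZMod (p ^ n₁ * q ^ n₂)), ?_, ?_⟩
        · simp only [Finset.mem_filter, Finset.mem_univ, true_and, hpval]
          exact dvd_rfl
        · refine (aux_adj_iff hp hq h1 h2 _ v).mpr ⟨?_, ?_, ?_⟩
          · intro h; rw [← h, hpval] at hv; exact hv dvd_rfl
          · rintro ⟨-, h⟩; exact hv h
          · rintro ⟨h, -⟩; rw [hpval] at h; exact hqnp h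
    · constructor
      · intro x hx y hy hadj
        simp only [Finset.mem_filter, Finset.mem_univ, true_and] at hx hy
        exact ((aux_adj_iff hp hq h1 h2 x y).mp hadj).2.2 ⟨hx, hy⟩
      · intro v hv
        simp only [Finset.mem_filter, Finset.mem_univ, true_and] at hv
        refine ⟨(q : ZMod (p ^ n₁ * q ^ n₂)), ?_, ?_⟩
        · simp only [Finset.mem_filter, Finset.mem_univ, true_and, hqval]
          exact dvd_rfl
        · refine (aux_adj_iff hp hq h1 h2 _ v).mpr ⟨?_, ?_, ?_⟩
          · intro h; rw [← h, hqval] at hv; exact hv dvd_rfl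
          · rintro ⟨h, -⟩; rw [hqval] at h; exact hpnq h
          · rintro ⟨-, h⟩; exact hv h



/-- For `n = p^{n₁} q^{n₂}` with primes `p < q` and `n₁, n₂ ≥ 1`,
`D_i(Γ(ℤ_n), x) = φ(n)·x + x^(p^{n₁} q^{n₂−1}) + x^(p^{n₁−1} q^{n₂})`. -/
theorem stmt_7 (p q n₁ n₂ : ℕ) (hp : p.Prime) (hq : q.Prime) (hpq : p < q)
    (h1 : 1 ≤ n₁) (h2 : 1 ≤ n₂) :
    indepDomPoly (comaximalGraph (p ^ n₁ * q ^ n₂)) =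
      Polynomial.C ((Nat.totient (p ^ n₁ * q ^ n₂) : ℝ)) * Polynomial.X +
        Polynomial.X ^ (p ^ n₁ * q ^ (n₂ - 1)) +
        Polynomial.X ^ (p ^ (n₁ - 1) * q ^ n₂) := by
  haveI hNZ : NeZero (p ^ n₁ * q ^ n₂) :=
    ⟨Nat.mul_ne_zero (pow_ne_zero _ hp.pos.ne') (pow_ne_zero _ hq.pos.ne')⟩
  set N := p ^ n₁ * q ^ n₂ with hN
  set m1 := p ^ n₁ * q ^ (n₂ - 1) with hm1
  set m2 := p ^ (n₁ - 1) * q ^ n₂ with hm2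
  set G := comaximalGraph N with hG
  have e2 : q ^ (n₂ - 1) * q = q ^ n₂ := by rw [← pow_succ]; congr 1; omega
  have e1 : p ^ (n₁ - 1) * p = p ^ n₁ := by rw [← pow_succ]; congr 1; omega
  have hNm1 : N = q * m1 := by rw [hN, hm1, ← e2]; ring
  have hNm2 : N = p * m2 := by rw [hN, hm2, ← e1]; ring
  have cardQ : (Finset.univ.filter (fun x : ZMod N => q ∣ x.val)).card = m1 :=
    aux_card_filter hNm1
  have cardP : (Finset.univ.filter (fun x : ZMod N => p ∣ x.val)).card = m2 :=
    aux_card_filter hNm2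
  have hm1pos : 0 < m1 := Nat.mul_pos (pow_pos hp.pos _) (pow_pos hq.pos _)
  have hm1ge2 : 2 ≤ m1 := by
    have ha : p ≤ p ^ n₁ := Nat.le_self_pow (by omega) p
    have hb : p ^ n₁ ≤ m1 := Nat.le_mul_of_pos_right _ (pow_pos hq.pos _)
    have := hp.two_le
    omega
  have hm2ge2 : 2 ≤ m2 := by
    have ha : q ≤ q ^ n₂ := Nat.le_self_pow (by omega) q
    have hb : q ^ n₂ ≤ m2 := Nat.le_mul_of_pos_left _ (pow_pos hp.pos _)
    have := hq.two_le
    omega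
  have hm12 : m1 ≠ m2 := by
    intro h
    have : q * m1 = p * m1 := by rw [← hNm1, h, ← hNm2]
    have : q = p := Nat.eq_of_mul_eq_mul_right hm1pos this
    omega
  -- counting with card 1
  have hone : Nat.card {S : Finset (ZMod N) // IsIndepDomSet G S ∧ S.card = 1}
      = Nat.totient N := by
    have key1 : ∀ a : ZMod N, IsUnit a → IsIndepDomSet G {a} := fun a ha =>
      (aux_classify hp hq hpq h1 h2 {a}).mpr (Or.inl ⟨a, ha, rfl⟩)
    let f : {a : ZMod N // IsUnit a} → {S : Finset (ZMod N) // IsIndepDomSet G S ∧ S.card = 1} :=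
      fun a => ⟨{a.1}, key1 a.1 a.2, Finset.card_singleton _⟩
    have hfbij : Function.Bijective f := by
      constructor
      · intro a b h
        exact Subtype.ext (Finset.singleton_injective (congrArg Subtype.val h))
      · rintro ⟨S, hS, hc⟩
        rcases (aux_classify hp hq hpq h1 h2 S).mp hS with ⟨a, ha, rfl⟩ | rfl | rfl
        · exact ⟨⟨a, ha⟩, Subtype.ext rfl⟩
        · rw [cardP] at hc; omega
        · rw [cardQ] at hc; omega
    let g : (ZMod N)ˣ → {a : ZMod N // IsUnit a} := fun u => ⟨u, u.isUnit⟩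
    have hgbij : Function.Bijective g := by
      constructor
      · intro u v h
        exact Units.ext (congrArg Subtype.val h)
      · rintro ⟨a, u, rfl⟩
        exact ⟨u, rfl⟩
    rw [← Nat.card_eq_of_bijective f hfbij, ← Nat.card_eq_of_bijective g hgbij,
      Nat.card_eq_fintype_card, ZMod.card_units_eq_totient]
  -- unique sets of card m1 and m2
  have huniqQ : ∀ S : Finset (ZMod N), IsIndepDomSet G S → S.card = m1 →
      S = Finset.univ.filter (fun x : ZMod N => q ∣ x.val) := by
    intro S hS hc
    rcases (aux_classify hp hq hpq h1 h2 S).mp hS with ⟨a, ha, rfl⟩ | rfl | rfl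
    · rw [Finset.card_singleton] at hc; omega
    · rw [cardP] at hc; exact absurd hc hm12.symm
    · rfl
  have huniqP : ∀ S : Finset (ZMod N), IsIndepDomSet G S → S.card = m2 →
      S = Finset.univ.filter (fun x : ZMod N => p ∣ x.val) := by
    intro S hS hc
    rcases (aux_classify hp hq hpq h1 h2 S).mp hS with ⟨a, ha, rfl⟩ | rfl | rfl
    · rw [Finset.card_singleton] at hc; omega
    · rfl
    · rw [cardQ] at hc; exact absurd hc hm12
  have hQmem : IsIndepDomSet G (Finset.univ.filter (fun x : ZMod N => q ∣ x.val)) :=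
    (aux_classify hp hq hpq h1 h2 _).mpr (Or.inr (Or.inr rfl))
  have hPmem : IsIndepDomSet G (Finset.univ.filter (fun x : ZMod N => p ∣ x.val)) :=
    (aux_classify hp hq hpq h1 h2 _).mpr (Or.inr (Or.inl rfl))
  have hcm1 : Nat.card {S : Finset (ZMod N) // IsIndepDomSet G S ∧ S.card = m1} = 1 := by
    haveI : Nonempty {S : Finset (ZMod N) // IsIndepDomSet G S ∧ S.card = m1} :=
      ⟨⟨_, hQmem, cardQ⟩⟩
    haveI : Subsingleton {S : Finset (ZMod N) // IsIndepDomSet G S ∧ S.card = m1} := by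
      constructor
      rintro ⟨S1, hS1, hc1⟩ ⟨S2, hS2, hc2⟩
      exact Subtype.ext ((huniqQ S1 hS1 hc1).trans (huniqQ S2 hS2 hc2).symm)
    exact Nat.card_unique
  have hcm2 : Nat.card {S : Finset (ZMod N) // IsIndepDomSet G S ∧ S.card = m2} = 1 := by
    haveI : Nonempty {S : Finset (ZMod N) // IsIndepDomSet G S ∧ S.card = m2} :=
      ⟨⟨_, hPmem, cardP⟩⟩
    haveI : Subsingleton {S : Finset (ZMod N) // IsIndepDomSet G S ∧ S.card = m2} := by
      constructor
      rintro ⟨S1, hS1, hc1⟩ ⟨S2, hS2, hc2⟩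
      exact Subtype.ext ((huniqP S1 hS1 hc1).trans (huniqP S2 hS2 hc2).symm)
    exact Nat.card_unique
  have hzero : ∀ k : ℕ, k ≠ 1 → k ≠ m1 → k ≠ m2 →
      Nat.card {S : Finset (ZMod N) // IsIndepDomSet G S ∧ S.card = k} = 0 := by
    intro k hk1 hkm1 hkm2
    haveI : IsEmpty {S : Finset (ZMod N) // IsIndepDomSet G S ∧ S.card = k} := by
      constructor
      rintro ⟨S, hS, hc⟩
      rcases (aux_classify hp hq hpq h1 h2 S).mp hS with ⟨a, ha, rfl⟩ | rfl | rfl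
      · rw [Finset.card_singleton] at hc; exact hk1 hc.symm
      · rw [cardP] at hc; exact hkm2 hc.symm
      · rw [cardQ] at hc; exact hkm1 hc.symm
    exact Nat.card_of_isEmpty
  -- assemble
  have hNcard : Nat.card (ZMod N) = N := by rw [Nat.card_eq_fintype_card, ZMod.card]
  have h1N : 1 ≤ N := Nat.one_le_iff_ne_zero.mpr hNZ.ne
  have hm1N : m1 ≤ N := by rw [hNm1]; exact Nat.le_mul_of_pos_left _ hq.pos
  have hm2N : m2 ≤ N := by rw [hNm2]; exact Nat.le_mul_of_pos_left _ hp.pos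
  have hsub : ({1, m1, m2} : Finset ℕ) ⊆ Finset.range (N + 1) := by
    intro k hk
    simp only [Finset.mem_insert, Finset.mem_singleton] at hk
    rw [Finset.mem_range]
    rcases hk with rfl | rfl | rfl <;> omega
  rw [indepDomPoly, hNcard]
  rw [← Finset.sum_subset hsub (by
    intro k _ hk
    simp only [Finset.mem_insert, Finset.mem_singleton, not_or] at hk
    rw [hzero k hk.1 hk.2.1 hk.2.2]
    simp)]
  have h1m : (1 : ℕ) ∉ ({m1, m2} : Finset ℕ) := by
    simp only [Finset.mem_insert, Finset.mem_singleton]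
    omega
  have hmm : m1 ∉ ({m2} : Finset ℕ) := by
    simp only [Finset.mem_singleton]
    exact hm12
  rw [Finset.sum_insert h1m, Finset.sum_insert hmm, Finset.sum_singleton]
  rw [hone, hcm1, hcm2]
  simp only [Nat.cast_one, map_one, one_mul, pow_one]
  ring
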